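/- arXiv:1909.12658 — 2 statements merged into one kernel-verified Lean document; each statement's English description precedes it below -/
import Mathlib

section
/- Let n ∈ ℕ, let f : (Fin n → Bool) → Bool, let I₁,…,I_m ⊆ Fin n be pairwise disjoint finite sets, and let J ⊆ Fin n be a nonempty finite set disjoint from each I_ℓ. Writing B = I₁ ∪ … ∪ I_m, one has RC(B,J) = min_{k ∈ J} ( RC(B, J∖{k}) + w(B ∪ J, k) ). -/
open Finset

def restrict (n : ℕ) (f : (Fin n → Bool) → Bool) (S : Finset (Fin n)) (b : Fin n → Bool) :
    (Fin n → Bool) → Bool :=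
  fun x => f fun i => if i ∈ S then b i else x i

def DependsOnVar (n : ℕ) (g : (Fin n → Bool) → Bool) (i : Fin n) : Prop :=
  ∃ x : Fin n → Bool, g x ≠ g (Function.update x i (!x i))

noncomputable def width (n : ℕ) (f : (Fin n → Bool) → Bool) (I : Finset (Fin n)) (i : Fin n) : ℕ :=
  Set.ncard {g : (Fin n → Bool) → Bool | DependsOnVar n g i ∧ ∃ b, g = restrict n f Iᶜ b}

noncomputable def RC (n : ℕ) (f : (Fin n → Bool) → Bool) (B J : Finset (Fin n)) : ℕ :=
  sInf { c | ∃ σ : Fin J.card ≃ {j // j ∈ J},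
    c = ∑ j : Fin J.card,
          width n f (B ∪ (Finset.Iic j).image (fun t => ((σ t : {j // j ∈ J}) : Fin n))) (σ j) }

noncomputable def MC (n : ℕ) (f : (Fin n → Bool) → Bool) (I : Finset (Fin n)) : ℕ :=
  RC n f ∅ I

/- ### Auxiliary machinery -/

/-- The cost of reading the variables `g 0, g 1, …` (after which the variables of `B` are read). -/
noncomputable def cost (n : ℕ) (f : (Fin n → Bool) → Bool) (B : Finset (Fin n)) {q : ℕ}
    (g : Fin q → Fin n) : ℕ :=
  ∑ j : Fin q, width n f (B ∪ (Finset.Iic j).image g) (g j)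

lemma Iic_cast' {p q : ℕ} (h : q = p) (j : Fin q) :
    (Iic j).image (Fin.cast h) = Iic (Fin.cast h j) := by
  ext a
  simp only [mem_image, mem_Iic, Fin.le_def]
  constructor
  · rintro ⟨t, ht, rfl⟩; simpa using ht
  · intro ha; exact ⟨Fin.cast h.symm a, by simpa using ha, by simp [Fin.ext_iff]⟩

lemma Iic_castSucc' (p : ℕ) (i : Fin p) :
    (Iic (Fin.castSucc i) : Finset (Fin (p+1))) = (Iic i).image Fin.castSucc := by
  ext a
  simp only [mem_Iic, mem_image, Fin.le_def]
  constructor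
  · intro ha
    have hi : (i : ℕ) < p := i.isLt
    have ha' : (a : ℕ) ≤ (i : ℕ) := by simpa using ha
    exact ⟨⟨a.1, by omega⟩, by simpa using ha', by simp [Fin.ext_iff]⟩
  · rintro ⟨t, ht, rfl⟩
    simpa using ht

lemma cost_cast (n : ℕ) (f : (Fin n → Bool) → Bool) (B : Finset (Fin n)) {p q : ℕ}
    (h : q = p) (g : Fin p → Fin n) :
    cost n f B (g ∘ Fin.cast h) = cost n f B g := by
  unfold cost
  refine Fintype.sum_equiv (finCongr h) _ _ fun j => ?_
  have h1 : (Iic j).image (g ∘ Fin.cast h) = (Iic (Fin.cast h j)).image g := by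
    rw [← Iic_cast' h j, Finset.image_image]
  simp only [Function.comp, finCongr_apply] at *
  rw [← h1]

lemma cost_snoc (n : ℕ) (f : (Fin n → Bool) → Bool) (B : Finset (Fin n)) {p : ℕ}
    (g : Fin p → Fin n) (k : Fin n) :
    cost n f B (Fin.snoc g k : Fin (p+1) → Fin n)
      = cost n f B g
        + width n f (B ∪ (univ : Finset (Fin (p+1))).image (Fin.snoc g k)) k := by
  unfold cost
  rw [Fin.sum_univ_castSucc]
  congr 1
  · refine Finset.sum_congr rfl fun i _ => ?_
    have h2 : (Iic (Fin.castSucc i)).image (Fin.snoc g k : Fin (p+1) → Fin n)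
        = (Iic i).image g := by
      rw [Iic_castSucc', Finset.image_image]
      refine Finset.image_congr fun t _ => ?_
      simp [Fin.snoc_castSucc]
    rw [h2, Fin.snoc_castSucc]
  · have h3 : (Iic (Fin.last p)) = (univ : Finset (Fin (p+1))) := by
      ext a; simp [Fin.le_last]
    rw [h3, Fin.snoc_last]

lemma RC_eq_sInf_cost (n : ℕ) (f : (Fin n → Bool) → Bool) (B S : Finset (Fin n)) :
    RC n f B S
      = sInf { c | ∃ σ : Fin S.card ≃ {j // j ∈ S},
          c = cost n f B (fun t => ((σ t : {j // j ∈ S}) : Fin n)) } := rfl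

lemma RC_le_cost (n : ℕ) (f : (Fin n → Bool) → Bool) (B S : Finset (Fin n))
    (σ : Fin S.card ≃ {j // j ∈ S}) :
    RC n f B S ≤ cost n f B (fun t => ((σ t : {j // j ∈ S}) : Fin n)) := by
  rw [RC_eq_sInf_cost]
  exact Nat.sInf_le ⟨σ, rfl⟩

lemma RC_exists_cost (n : ℕ) (f : (Fin n → Bool) → Bool) (B S : Finset (Fin n)) :
    ∃ σ : Fin S.card ≃ {j // j ∈ S},
      RC n f B S = cost n f B (fun t => ((σ t : {j // j ∈ S}) : Fin n)) := by
  have hne : { c | ∃ σ : Fin S.card ≃ {j // j ∈ S},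
      c = cost n f B (fun t => ((σ t : {j // j ∈ S}) : Fin n)) }.Nonempty :=
    ⟨_, S.equivFin.symm, rfl⟩
  have := Nat.sInf_mem hne
  rw [← RC_eq_sInf_cost] at this
  exact this

lemma image_univ_coe_equiv {n : ℕ} (S : Finset (Fin n)) (e : Fin S.card ≃ {x // x ∈ S}) :
    (univ : Finset (Fin S.card)).image (fun t => ((e t : {x // x ∈ S}) : Fin n)) = S := by
  ext a
  simp only [mem_image, mem_univ, true_and]
  constructor
  · rintro ⟨t, rfl⟩; exact (e t).2
  · intro ha; exact ⟨e.symm ⟨a, ha⟩, by simp⟩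

lemma image_univ_comp_cast {n' p q : ℕ} (h : q = p) (g : Fin p → Fin n') :
    (univ : Finset (Fin q)).image (g ∘ Fin.cast h) = (univ : Finset (Fin p)).image g := by
  ext a
  simp only [mem_image, mem_univ, true_and, Function.comp]
  constructor
  · rintro ⟨t, rfl⟩; exact ⟨_, rfl⟩
  · rintro ⟨t, rfl⟩; exact ⟨Fin.cast h.symm t, by simp⟩

lemma image_univ_snoc {n' p : ℕ} (g : Fin p → Fin n') (k : Fin n') :
    (univ : Finset (Fin (p+1))).image (Fin.snoc g k)
      = insert k ((univ : Finset (Fin p)).image g) := by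
  ext a
  simp only [mem_image, mem_univ, true_and, mem_insert]
  constructor
  · rintro ⟨t, rfl⟩
    rcases Fin.eq_castSucc_or_eq_last t with ⟨i, rfl⟩ | rfl
    · right; exact ⟨i, by simp [Fin.snoc_castSucc]⟩
    · left; simp [Fin.snoc_last]
  · rintro (rfl | ⟨i, rfl⟩)
    · exact ⟨Fin.last p, by simp [Fin.snoc_last]⟩
    · exact ⟨Fin.castSucc i, by simp [Fin.snoc_castSucc]⟩

lemma snoc_injective {n' p : ℕ} {g : Fin p → Fin n'} {k : Fin n'}
    (hg : Function.Injective g) (hk : ∀ i, g i ≠ k) :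
    Function.Injective (Fin.snoc g k : Fin (p+1) → Fin n') := by
  intro a b hab
  rcases Fin.eq_castSucc_or_eq_last a with ⟨i, rfl⟩ | rfl <;>
    rcases Fin.eq_castSucc_or_eq_last b with ⟨j, rfl⟩ | rfl
  · simp only [Fin.snoc_castSucc] at hab
    exact congrArg _ (hg hab)
  · simp only [Fin.snoc_castSucc, Fin.snoc_last] at hab
    exact absurd hab (hk i)
  · simp only [Fin.snoc_castSucc, Fin.snoc_last] at hab
    exact absurd hab.symm (hk j)
  · rfl

/-- Lemma 5 (generalized DP lemma): for pairwise disjoint `I₁,…,I_m` and nonempty `J`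
disjoint from each `I_ℓ`, writing `B = I₁ ∪ … ∪ I_m`,
`RC(B, J) = min_{k ∈ J} (RC(B, J \ {k}) + w(B ∪ J, k))`. -/
theorem stmt_2 (n m : ℕ) (f : (Fin n → Bool) → Bool) (Is : Fin m → Finset (Fin n))
    (hdisj : ∀ a b : Fin m, a ≠ b → Disjoint (Is a) (Is b))
    (J : Finset (Fin n)) (hJ : J.Nonempty) (hJdisj : ∀ a : Fin m, Disjoint J (Is a)) :
    RC n f (Finset.univ.biUnion Is) J
      = J.inf' hJ (fun k =>
          RC n f (Finset.univ.biUnion Is) (J.erase k)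
            + width n f (Finset.univ.biUnion Is ∪ J) k) := by
  set B := Finset.univ.biUnion Is with hB
  apply le_antisymm
  · -- LHS ≤ RHS
    obtain ⟨k, hk, hkeq⟩ := J.exists_mem_eq_inf' hJ
      (fun k => RC n f B (J.erase k) + width n f (B ∪ J) k)
    rw [hkeq]
    obtain ⟨σ', hσ'⟩ := RC_exists_cost n f B (J.erase k)
    have hp : J.card = (J.erase k).card + 1 := (Finset.card_erase_add_one hk).symm
    set g : Fin ((J.erase k).card + 1) → Fin n :=
      Fin.snoc (fun t => ((σ' t : {x // x ∈ J.erase k}) : Fin n)) k with hg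
    have hgJ : ∀ t, g t ∈ J := by
      intro t
      rcases Fin.eq_castSucc_or_eq_last t with ⟨i, rfl⟩ | rfl
      · rw [hg]; simp only [Fin.snoc_castSucc]
        exact Finset.mem_of_mem_erase (σ' i).2
      · rw [hg]; simp only [Fin.snoc_last]; exact hk
    have hginj : Function.Injective g := by
      rw [hg]
      refine snoc_injective ?_ ?_
      · exact fun a b hab => σ'.injective (Subtype.val_injective hab)
      · intro i
        exact (Finset.mem_erase.1 (σ' i).2).1
    have hcastinj : Function.Injective (Fin.cast hp) := fun a b hab => by
      simpa [Fin.ext_iff] using congrArg Fin.val hab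
    -- build the equivalence on J
    have hbij : Function.Bijective
        (fun t : Fin J.card => (⟨g (Fin.cast hp t), hgJ _⟩ : {x // x ∈ J})) := by
      rw [Fintype.bijective_iff_injective_and_card]
      constructor
      · intro a b hab
        simp only [Subtype.mk.injEq] at hab
        exact hcastinj (hginj hab)
      · simp only [Fintype.card_fin, Fintype.card_coe]
    set σ : Fin J.card ≃ {x // x ∈ J} := Equiv.ofBijective _ hbij with hσ
    have hle := RC_le_cost n f B J σ
    have hcoe : (fun t => ((σ t : {x // x ∈ J}) : Fin n)) = g ∘ Fin.cast hp := rfl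
    rw [hcoe, cost_cast, hg, cost_snoc, ← hg] at hle
    have himg : (univ : Finset (Fin ((J.erase k).card + 1))).image g = J := by
      rw [hg, image_univ_snoc, image_univ_coe_equiv (J.erase k) σ',
        Finset.insert_erase hk]
    rw [hg, image_univ_snoc] at himg
    rw [image_univ_snoc, himg, ← hσ'] at hle
    exact hle
  · -- RHS ≤ LHS
    obtain ⟨σ, hσ⟩ := RC_exists_cost n f B J
    obtain ⟨p, hp⟩ : ∃ p, J.card = p + 1 :=
      ⟨J.card - 1, by have := Finset.card_pos.2 hJ; omega⟩
    set g : Fin (p+1) → Fin n :=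
      (fun t => ((σ t : {x // x ∈ J}) : Fin n)) ∘ Fin.cast hp.symm with hg
    have hcost : cost n f B g = RC n f B J := by
      rw [hg, cost_cast, ← hσ]
    have hgJ : ∀ t, g t ∈ J := fun t => (σ (Fin.cast hp.symm t)).2
    have hcastinj : Function.Injective (Fin.cast hp.symm) := fun a b hab => by
      simpa [Fin.ext_iff] using congrArg Fin.val hab
    have hginj : Function.Injective g := by
      intro a b hab
      exact hcastinj (σ.injective (Subtype.val_injective hab))
    set k := g (Fin.last p) with hkdef
    have hk : k ∈ J := hgJ _
    have he : (J.erase k).card = p := by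
      rw [Finset.card_erase_of_mem hk, hp]
      omega
    have hcastinj' : Function.Injective (Fin.cast he) := fun a b hab => by
      simpa [Fin.ext_iff] using congrArg Fin.val hab
    -- build the equivalence on J.erase k
    have hinitmem : ∀ i : Fin (J.erase k).card,
        g (Fin.castSucc (Fin.cast he i)) ∈ J.erase k := by
      intro i
      refine Finset.mem_erase.2 ⟨?_, hgJ _⟩
      intro hcontra
      have h5 := hginj hcontra
      have h6 : ((Fin.cast he i).castSucc : ℕ) < p := by
        simpa using (Fin.cast he i).isLt
      rw [h5] at h6
      simp at h6
    have hbij' : Function.Bijective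
        (fun i : Fin (J.erase k).card =>
          (⟨g (Fin.castSucc (Fin.cast he i)), hinitmem i⟩ : {x // x ∈ J.erase k})) := by
      rw [Fintype.bijective_iff_injective_and_card]
      constructor
      · intro a b hab
        simp only [Subtype.mk.injEq] at hab
        exact hcastinj' (Fin.castSucc_injective _ (hginj hab))
      · simp only [Fintype.card_fin, Fintype.card_coe]
    set σ' : Fin (J.erase k).card ≃ {x // x ∈ J.erase k} := Equiv.ofBijective _ hbij' with hσ'
    have hle := RC_le_cost n f B (J.erase k) σ'
    have hcoe' : (fun t => ((σ' t : {x // x ∈ J.erase k}) : Fin n))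
        = (g ∘ Fin.castSucc) ∘ Fin.cast he := rfl
    rw [hcoe', cost_cast] at hle
    -- decompose cost g
    have hsplit : cost n f B g
        = cost n f B (g ∘ Fin.castSucc)
          + width n f (B ∪ (univ : Finset (Fin (p+1))).image g) k := by
      have hsn : g = Fin.snoc (g ∘ Fin.castSucc) (g (Fin.last p)) := by
        funext t
        rcases Fin.eq_castSucc_or_eq_last t with ⟨i, rfl⟩ | rfl
        · simp [Fin.snoc_castSucc]
        · simp [Fin.snoc_last]
      conv_lhs => rw [hsn]
      rw [cost_snoc, ← hsn, ← hkdef]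
    have himg : (univ : Finset (Fin (p+1))).image g = J := by
      rw [hg, image_univ_comp_cast, image_univ_coe_equiv J σ]
    rw [himg] at hsplit
    calc J.inf' hJ (fun k => RC n f B (J.erase k) + width n f (B ∪ J) k)
        ≤ RC n f B (J.erase k) + width n f (B ∪ J) k := Finset.inf'_le _ hk
      _ ≤ cost n f B (g ∘ Fin.castSucc) + width n f (B ∪ J) k := by gcongr
      _ = cost n f B g := hsplit.symm
      _ = RC n f B J := hcost
end

section
/- Let n ∈ ℕ, let f : (Fin n → Bool) → Bool, let B, J ⊆ Fin n be disjoint finite sets with J nonempty, and let k be an integer with 1 ≤ k ≤ |J|. Then RC(B,J) = min over finite sets K ⊆ J with |K| = k of ( RC(B,K) + RC(B ∪ K, J∖K) ). -/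
open Finset

/-- Cost of reading a list of variables, accumulating the prefix set. -/
noncomputable def listCost (n : ℕ) (f : (Fin n → Bool) → Bool) :
    Finset (Fin n) → List (Fin n) → ℕ
  | _, [] => 0
  | B, i :: t => width n f (insert i B) i + listCost n f (insert i B) t

lemma Iic_succ_image {m n : ℕ} (j : Fin m) (g : Fin (m + 1) → Fin n) :
    (Finset.Iic j.succ).image g = insert (g 0) ((Finset.Iic j).image (fun t => g t.succ)) := by
  ext a
  simp only [mem_image, mem_insert, mem_Iic]
  constructor
  · rintro ⟨t, ht, rfl⟩
    rcases Fin.eq_zero_or_eq_succ t with rfl | ⟨s, rfl⟩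
    · exact Or.inl rfl
    · exact Or.inr ⟨s, Fin.succ_le_succ_iff.mp ht, rfl⟩
  · rintro (rfl | ⟨s, hs, rfl⟩)
    · exact ⟨0, Fin.zero_le _, rfl⟩
    · exact ⟨s.succ, Fin.succ_le_succ_iff.mpr hs, rfl⟩

lemma sum_eq_listCost (n : ℕ) (f : (Fin n → Bool) → Bool) :
    ∀ (m : ℕ) (g : Fin m → Fin n) (B : Finset (Fin n)),
      (∑ j : Fin m, width n f (B ∪ (Finset.Iic j).image g) (g j))
        = listCost n f B (List.ofFn g)
  | 0, g, B => by simp [listCost]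
  | m + 1, g, B => by
    rw [Fin.sum_univ_succ, List.ofFn_succ]
    have h0 : (Finset.Iic (0 : Fin (m + 1))).image g = {g 0} := by
      have : (Finset.Iic (0 : Fin (m + 1))) = {0} := by
        ext t; simp [Fin.le_zero_iff]
      rw [this, Finset.image_singleton]
    have hstep : ∀ j : Fin m,
        B ∪ (Finset.Iic j.succ).image g
          = insert (g 0) B ∪ (Finset.Iic j).image (fun t => g t.succ) := by
      intro j
      rw [Iic_succ_image, Finset.union_insert, Finset.insert_union]
    have hB0 : B ∪ {g 0} = insert (g 0) B := by
      rw [Finset.union_comm, ← Finset.insert_eq]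
    simp only [listCost, h0, hB0, hstep]
    congr 1
    exact sum_eq_listCost n f m (fun t => g t.succ) (insert (g 0) B)

lemma ofFn_get_cast {α : Type*} (l : List α) {m : ℕ} (h : l.length = m) :
    List.ofFn (fun i : Fin m => l.get (Fin.cast h.symm i)) = l := by
  subst h
  exact List.ofFn_get l

lemma RC_eq_sInf_list (n : ℕ) (f : (Fin n → Bool) → Bool) (B J : Finset (Fin n)) :
    RC n f B J
      = sInf {c | ∃ l : List (Fin n), l.Nodup ∧ l.toFinset = J ∧ c = listCost n f B l} := by
  unfold RC
  congr 1
  ext c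
  simp only [Set.mem_setOf_eq]
  constructor
  · rintro ⟨σ, rfl⟩
    refine ⟨List.ofFn (fun j => ((σ j : {j // j ∈ J}) : Fin n)), ?_, ?_, ?_⟩
    · rw [List.nodup_ofFn]
      intro a b h
      exact σ.injective (Subtype.ext h)
    · ext a
      simp only [List.mem_toFinset, List.mem_ofFn, Set.mem_range]
      constructor
      · rintro ⟨j, rfl⟩; exact (σ j).2
      · intro ha; exact ⟨σ.symm ⟨a, ha⟩, by simp⟩
    · exact sum_eq_listCost n f J.card (fun t => ((σ t : {j // j ∈ J}) : Fin n)) B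
  · rintro ⟨l, hnd, hJl, rfl⟩
    have hlen : l.length = J.card := by
      rw [← hJl]; exact (List.toFinset_card_of_nodup hnd).symm
    have hmem : ∀ j : Fin J.card, l.get (Fin.cast hlen.symm j) ∈ J := by
      intro j
      have h := List.mem_toFinset.mpr
        (List.get_mem l (Fin.cast hlen.symm j))
      rwa [hJl] at h
    let e : Fin J.card → {j // j ∈ J} := fun j => ⟨l.get (Fin.cast hlen.symm j), hmem j⟩
    have hinj : Function.Injective e := by
      intro a b h
      have h2 := List.nodup_iff_injective_get.mp hnd (congrArg Subtype.val h)
      have h3 := congrArg Fin.val h2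
      simp only [Fin.coe_cast] at h3
      exact Fin.ext h3
    have hbij : Function.Bijective e := by
      refine (Fintype.bijective_iff_injective_and_card e).mpr ⟨hinj, ?_⟩
      simp
    refine ⟨Equiv.ofBijective e hbij, ?_⟩
    have := sum_eq_listCost n f J.card
      (fun t => ((Equiv.ofBijective e hbij t : {j // j ∈ J}) : Fin n)) B
    rw [this]
    have : List.ofFn (fun t : Fin J.card =>
        ((Equiv.ofBijective e hbij t : {j // j ∈ J}) : Fin n))
        = List.ofFn (fun i : Fin J.card => l.get (Fin.cast hlen.symm i)) := rfl
    rw [this, ofFn_get_cast l hlen]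

lemma RC_le_listCost (n : ℕ) (f : (Fin n → Bool) → Bool) (B J : Finset (Fin n))
    (l : List (Fin n)) (hnd : l.Nodup) (ht : l.toFinset = J) :
    RC n f B J ≤ listCost n f B l := by
  rw [RC_eq_sInf_list]
  exact Nat.sInf_le ⟨l, hnd, ht, rfl⟩

lemma exists_min_list (n : ℕ) (f : (Fin n → Bool) → Bool) (B J : Finset (Fin n)) :
    ∃ l : List (Fin n), l.Nodup ∧ l.toFinset = J ∧ RC n f B J = listCost n f B l := by
  have hne : {c | ∃ l : List (Fin n), l.Nodup ∧ l.toFinset = J ∧ c = listCost n f B l}.Nonempty :=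
    ⟨listCost n f B J.toList, J.toList, J.nodup_toList, J.toList_toFinset, rfl⟩
  have := Nat.sInf_mem hne
  rw [← RC_eq_sInf_list] at this
  obtain ⟨l, hnd, ht, hc⟩ := this
  exact ⟨l, hnd, ht, hc⟩

lemma listCost_append (n : ℕ) (f : (Fin n → Bool) → Bool) :
    ∀ (l₁ l₂ : List (Fin n)) (B : Finset (Fin n)),
      listCost n f B (l₁ ++ l₂) = listCost n f B l₁ + listCost n f (B ∪ l₁.toFinset) l₂
  | [], l₂, B => by simp [listCost]
  | i :: t, l₂, B => by
    simp only [List.cons_append, listCost, List.toFinset_cons, List.append_eq]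
    rw [listCost_append n f t l₂ (insert i B), add_assoc, Finset.insert_union, Finset.union_insert]

/-- Lemma 7 (divide and conquer): for disjoint `B`, `J` with `J` nonempty and `1 ≤ k ≤ |J|`,
`RC(B, J) = min_{K ⊆ J, |K| = k} (RC(B, K) + RC(B ∪ K, J \ K))`. -/
theorem stmt_3 (n : ℕ) (f : (Fin n → Bool) → Bool) (B J : Finset (Fin n))
    (hBJ : Disjoint B J) (hJ : J.Nonempty) (k : ℕ) (hk1 : 1 ≤ k) (hk2 : k ≤ J.card) :
    RC n f B J
      = (J.powersetCard k).inf' (Finset.powersetCard_nonempty.mpr hk2)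
          (fun K => RC n f B K + RC n f (B ∪ K) (J \ K)) := by
  apply le_antisymm
  · rw [Finset.le_inf'_iff]
    intro K hK
    obtain ⟨hKJ, hKcard⟩ := Finset.mem_powersetCard.mp hK
    obtain ⟨l₁, h₁n, h₁t, h₁c⟩ := exists_min_list n f B K
    obtain ⟨l₂, h₂n, h₂t, h₂c⟩ := exists_min_list n f (B ∪ K) (J \ K)
    have hdisj : l₁.Disjoint l₂ := by
      intro a ha₁ ha₂
      have h1 : a ∈ K := h₁t ▸ List.mem_toFinset.mpr ha₁
      have h2 : a ∈ J \ K := h₂t ▸ List.mem_toFinset.mpr ha₂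
      exact (Finset.mem_sdiff.mp h2).2 h1
    have hnd : (l₁ ++ l₂).Nodup := h₁n.append h₂n hdisj
    have ht : (l₁ ++ l₂).toFinset = J := by
      rw [List.toFinset_append, h₁t, h₂t, Finset.union_sdiff_of_subset hKJ]
    have hle := RC_le_listCost n f B J (l₁ ++ l₂) hnd ht
    rw [listCost_append, h₁t] at hle
    rw [h₁c, h₂c]
    exact hle
  · obtain ⟨l, hn, ht, hc⟩ := exists_min_list n f B J
    have hlen : l.length = J.card := by
      rw [← ht]; exact (List.toFinset_card_of_nodup hn).symm
    set K := (l.take k).toFinset with hKdef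
    have htn : (l.take k).Nodup := (List.take_sublist k l).nodup hn
    have hdn : (l.drop k).Nodup := (List.drop_sublist k l).nodup hn
    have hKcard : K.card = k := by
      rw [hKdef, List.toFinset_card_of_nodup htn, List.length_take]
      omega
    have hKJ : K ⊆ J := by
      intro a ha
      rw [← ht]
      exact List.mem_toFinset.mpr ((List.take_sublist k l).subset (List.mem_toFinset.mp ha))
    have hK : K ∈ J.powersetCard k := Finset.mem_powersetCard.mpr ⟨hKJ, hKcard⟩
    have hdisj : List.Disjoint (l.take k) (l.drop k) := List.disjoint_take_drop hn le_rfl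
    have hdt : (l.drop k).toFinset = J \ K := by
      ext a
      simp only [List.mem_toFinset, Finset.mem_sdiff, ← ht, hKdef]
      constructor
      · intro ha
        refine ⟨(List.drop_sublist k l).subset ha, fun hkk => ?_⟩
        exact hdisj hkk ha
      · rintro ⟨hal, hna⟩
        rcases (List.mem_append.mp (by rw [List.take_append_drop]; exact hal :
            a ∈ l.take k ++ l.drop k)) with h | h
        · exact absurd h hna
        · exact h
    calc (J.powersetCard k).inf' (Finset.powersetCard_nonempty.mpr hk2)
          (fun K => RC n f B K + RC n f (B ∪ K) (J \ K))
        ≤ RC n f B K + RC n f (B ∪ K) (J \ K) := Finset.inf'_le _ hK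
      _ ≤ listCost n f B (l.take k) + listCost n f (B ∪ K) (l.drop k) :=
          add_le_add (RC_le_listCost n f B K _ htn rfl)
            (RC_le_listCost n f (B ∪ K) (J \ K) _ hdn hdt)
      _ = listCost n f B l := by
          rw [← listCost_append, List.take_append_drop]
      _ = RC n f B J := hc.symm
end
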